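/- Soundness of the CEGIS synthesis algorithm (Theorem 4.3): Assume the verification procedure Verify invoked by the Synthesize algorithm is sound, i.e. Verify(P, Ψ) returns true only if the programs P satisfy the relational specification Ψ. Then whenever the Synthesize procedure (Algorithm 1), given function symbols F = (f_1,…,f_n), grammars G = (G_1,…,G_n), and relational specification Ψ = ∀x̄. φ(x̄), returns a mapping P (not null), the programs in P satisfy Ψ, and the program P_i for each function symbol f_i conforms to its grammar G(f_i). -/

import Mathlib

namespace Relish

/-- Alphabet symbols for program and specification trees: DSL constructs,
variables `xᵢ`, constants, binary (relational/logical) operators, and negation. -/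
inductive Alpha (op val bop : Type) : Type where
  | dsl : op → Alpha op val bop
  | var : ℕ → Alpha op val bop
  | cst : val → Alpha op val bop
  | lop : bop → Alpha op val bop
  | neg : Alpha op val bop

/-- Finite trees (terms) over an alphabet. -/
inductive Tree (α : Type) : Type where
  | node : α → List (Tree α) → Tree α

/-- Bottom-up finite tree automaton: states, final states, and transitions
`σ(q₁, …, qₙ) → q`. -/
structure FTA (α Q : Type) : Type where
  states : Set Q
  finals : Set Q
  trans : Set (α × List Q × Q)

/-- A run of an FTA on a tree reaching state `q`, in which every variable leaf
`var i` is assigned the state `leaf i`. -/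
inductive RunFrom {op val bop Q : Type} (A : FTA (Alpha op val bop) Q) (leaf : ℕ → Q) :
    Tree (Alpha op val bop) → Q → Prop where
  | node (a : Alpha op val bop) (ts : List (Tree (Alpha op val bop))) (qs : List Q) (q : Q) :
      (a, qs, q) ∈ A.trans →
      (∀ i : ℕ, a = Alpha.var i → q = leaf i) →
      ts.length = qs.length →
      (∀ p ∈ ts.zip qs, RunFrom A leaf p.1 p.2) →
      RunFrom A leaf (Tree.node a ts) q

/-- Symbols labeling FTA states: grammar nonterminals, variables `xᵢ`, or the
special start/constant symbol `s₀`. -/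
inductive SymT (ν : Type) : Type where
  | nt : ν → SymT ν
  | var : ℕ → SymT ν
  | start : SymT ν

/-- A context-free grammar: productions `s → σ(s₁, …, sₙ)` and a start symbol. -/
structure Grammar (op ν : Type) : Type where
  prods : Set (ν × op × List (SymT ν))
  start : ν

/-- Derivation of a tree from a grammar symbol. -/
inductive Derives {op val bop ν : Type} (G : Grammar op ν) :
    SymT ν → Tree (Alpha op val bop) → Prop where
  | var (i : ℕ) : Derives G (SymT.var i) (Tree.node (Alpha.var i) [])
  | prod (s : ν) (o : op) (ss : List (SymT ν)) (ts : List (Tree (Alpha op val bop))) :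
      (s, o, ss) ∈ G.prods →
      ss.length = ts.length →
      (∀ p ∈ ss.zip ts, Derives G p.1 p.2) →
      Derives G (SymT.nt s) (Tree.node (Alpha.dsl o) ts)

/-- A program (tree) conforms to grammar `G` if it is derivable from the start symbol. -/
def ConformsTo {op val bop ν : Type} (G : Grammar op ν) (t : Tree (Alpha op val bop)) : Prop :=
  Derives G (SymT.nt G.start) t

/-- Evaluation of a program tree under DSL semantics `sem`, binary operator
semantics `bsem`, negation semantics `nsem`, and argument assignment `args`. -/
inductive EvalsTo {op val bop : Type} (sem : op → List val → val)
    (bsem : bop → val → val → val) (nsem : val → val) (args : ℕ → val) :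
    Tree (Alpha op val bop) → val → Prop where
  | var (i : ℕ) : EvalsTo sem bsem nsem args (Tree.node (Alpha.var i) []) (args i)
  | cst (c : val) : EvalsTo sem bsem nsem args (Tree.node (Alpha.cst c) []) c
  | dsl (o : op) (ts : List (Tree (Alpha op val bop))) (cs : List val) :
      ts.length = cs.length →
      (∀ p ∈ ts.zip cs, EvalsTo sem bsem nsem args p.1 p.2) →
      EvalsTo sem bsem nsem args (Tree.node (Alpha.dsl o) ts) (sem o cs)
  | lop (b : bop) (t₁ t₂ : Tree (Alpha op val bop)) (c₁ c₂ : val) :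
      EvalsTo sem bsem nsem args t₁ c₁ →
      EvalsTo sem bsem nsem args t₂ c₂ →
      EvalsTo sem bsem nsem args (Tree.node (Alpha.lop b) [t₁, t₂]) (bsem b c₁ c₂)
  | neg (t : Tree (Alpha op val bop)) (c : val) :
      EvalsTo sem bsem nsem args t c →
      EvalsTo sem bsem nsem args (Tree.node Alpha.neg [t]) (nsem c)

/-- States of `BuildFTA(G, [Q₁, …, Qₘ])`, generated by the Input and Prod rules;
`init i` is the set of values of the i-th initial state set `Qᵢ`. -/
inductive BStates {op val ν : Type} (G : Grammar op ν) (sem : op → List val → val)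
    (arity : ℕ) (init : ℕ → Set val) : SymT ν × val → Prop where
  | input (i : ℕ) (c : val) : i < arity → c ∈ init i →
      BStates G sem arity init (SymT.var i, c)
  | prod (s : ν) (o : op) (ss : List (SymT ν)) (cs : List val) :
      (s, o, ss) ∈ G.prods →
      ss.length = cs.length →
      (∀ p ∈ ss.zip cs, BStates G sem arity init p) →
      BStates G sem arity init (SymT.nt s, sem o cs)

/-- Transitions of `BuildFTA(G, [Q₁, …, Qₘ])` (Input and Prod rules). -/
inductive BTrans {op val ν : Type} (bop : Type) (G : Grammar op ν) (sem : op → List val → val)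
    (arity : ℕ) (init : ℕ → Set val) :
    Alpha op val bop × List (SymT ν × val) × (SymT ν × val) → Prop where
  | input (i : ℕ) (c : val) : i < arity → c ∈ init i →
      BTrans bop G sem arity init (Alpha.var i, [], (SymT.var i, c))
  | prod (s : ν) (o : op) (ss : List (SymT ν)) (cs : List val) :
      (s, o, ss) ∈ G.prods →
      ss.length = cs.length →
      (∀ p ∈ ss.zip cs, BStates G sem arity init p) →
      BTrans bop G sem arity init (Alpha.dsl o, ss.zip cs, (SymT.nt s, sem o cs))

/-- The FTA produced by the `BuildFTA` procedure: final states are all states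
`q_{s₀}^c` where `s₀` is the start symbol of the grammar (Output rule). -/
def buildFTA {op val ν : Type} (bop : Type) (G : Grammar op ν) (sem : op → List val → val)
    (arity : ℕ) (init : ℕ → Set val) : FTA (Alpha op val bop) (SymT ν × val) where
  states := {q | BStates G sem arity init q}
  finals := {q | BStates G sem arity init q ∧ q.1 = SymT.nt G.start}
  trans := {t | BTrans bop G sem arity init t}

/-- Hierarchical finite tree automaton; nodes are tree positions (the root is `[]`). -/
structure HFTA (α Q : Type) : Type where
  nodes : Set (List ℕ)
  fta : List ℕ → FTA α Q
  children : List ℕ → List (List ℕ)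
  inter : Set (Q × Q)

/-- Acceptance of a hierarchical tree `T` by an HFTA `H`, witnessed by root
states `ρ` and input-state assignments `leaf`: every node's term has an
accepting run, and for every edge from `v` to its i-th child `v'`, the final
state at the root of the run on `T v'` is related by the inter-FTA transitions
to the input state used for `xᵢ` in the run on `T v`. -/
def HAcceptWith {op val bop Q : Type} (H : HFTA (Alpha op val bop) Q)
    (T : List ℕ → Tree (Alpha op val bop)) (ρ : List ℕ → Q) (leaf : List ℕ → ℕ → Q) : Prop :=
  ∀ v ∈ H.nodes,
    ρ v ∈ (H.fta v).finals ∧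
    RunFrom (H.fta v) (leaf v) (T v) (ρ v) ∧
    ∀ (i : ℕ) (v' : List ℕ), (H.children v)[i]? = some v' → (ρ v', leaf v i) ∈ H.inter

/-- A hierarchical tree is accepted by an HFTA if some witnesses exist. -/
def HAccepts {op val bop Q : Type} (H : HFTA (Alpha op val bop) Q)
    (T : List ℕ → Tree (Alpha op val bop)) : Prop :=
  ∃ ρ leaf, HAcceptWith H T ρ leaf

/-- States of the FTAs inside a constructed HFTA: a node position paired with an
FTA state `q_s^c`. -/
abbrev TQ (ν val : Type) : Type := List ℕ × SymT ν × val

def emptyFTA {α Q : Type} : FTA α Q := ⟨∅, ∅, ∅⟩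

def mapFTA {α Q Q' : Type} (g : Q → Q') (A : FTA α Q) : FTA α Q' where
  states := g '' A.states
  finals := g '' A.finals
  trans := {t | ∃ a qs q, (a, qs, q) ∈ A.trans ∧ t = (a, qs.map g, g q)}

def tagState {ν val : Type} (i : ℕ) (q : TQ ν val) : TQ ν val := (i :: q.1, q.2)

/-- The values carried by the final states of the root FTA of an HFTA. -/
def rootVals {α ν val : Type} (H : HFTA α (TQ ν val)) : Set val :=
  {c | ∃ q ∈ (H.fta []).finals, q.2.2 = c}

/-- Combine a root FTA `A` with a list of children HFTAs, adding inter-FTA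
transitions from each final state `q_s^c` of a child's root FTA to the input
state `q_{xᵢ}^c` of the root FTA. -/
def combine {α ν val : Type} (A : FTA α (SymT ν × val)) (Hs : List (HFTA α (TQ ν val))) :
    HFTA α (TQ ν val) where
  nodes := {v | v = [] ∨ ∃ i H v', Hs[i]? = some H ∧ v' ∈ H.nodes ∧ v = i :: v'}
  fta := fun v =>
    match v with
    | [] => mapFTA (fun q => (([] : List ℕ), q)) A
    | i :: v' =>
      match Hs[i]? with
      | some H => mapFTA (tagState i) (H.fta v')
      | none => emptyFTA
  children := fun v =>
    match v with
    | [] => (List.range Hs.length).map (fun i => [i])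
    | i :: v' =>
      match Hs[i]? with
      | some H => (H.children v').map (i :: ·)
      | none => []
  inter :=
    {e | ∃ i H q q', Hs[i]? = some H ∧ (q, q') ∈ H.inter ∧ e = (tagState i q, tagState i q')} ∪
    {e | ∃ i H q, Hs[i]? = some H ∧ q ∈ (H.fta []).finals ∧
        e = (tagState i q, (([] : List ℕ), (SymT.var i, q.2.2)))}

/-- FTA for a constant node (Const rule): accepts only the constant `c`. -/
def constFTA {op val ν : Type} (bop : Type) (c : val) :
    FTA (Alpha op val bop) (SymT ν × val) where
  states := {(SymT.start, c)}
  finals := {(SymT.start, c)}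
  trans := {(Alpha.cst c, [], (SymT.start, c))}

/-- FTA for a binary relational/logical operator node (Logical rule). -/
def logicFTA {op val bop ν : Type} (vtrue vfalse : val) (bsem : bop → val → val → val)
    (b : bop) (C₁ C₂ : Set val) : FTA (Alpha op val bop) (SymT ν × val) where
  states := {q | ∃ c ∈ C₁, q = (SymT.var 0, c)} ∪ {q | ∃ c ∈ C₂, q = (SymT.var 1, c)} ∪
      {(SymT.start, vtrue), (SymT.start, vfalse)}
  finals := {(SymT.start, vtrue), (SymT.start, vfalse)}
  trans := {t | ∃ c ∈ C₁, t = (Alpha.var 0, [], (SymT.var 0, c))} ∪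
      {t | ∃ c ∈ C₂, t = (Alpha.var 1, [], (SymT.var 1, c))} ∪
      {t | ∃ c₁ ∈ C₁, ∃ c₂ ∈ C₂,
          t = (Alpha.lop b, [(SymT.var 0, c₁), (SymT.var 1, c₂)], (SymT.start, bsem b c₁ c₂))}

/-- FTA for a negation node (Neg rule). -/
def negFTA {op val bop ν : Type} (vtrue vfalse : val) (nsem : val → val) (C : Set val) :
    FTA (Alpha op val bop) (SymT ν × val) where
  states := {q | ∃ c ∈ C, q = (SymT.var 0, c)} ∪ {(SymT.start, vtrue), (SymT.start, vfalse)}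
  finals := {(SymT.start, vtrue), (SymT.start, vfalse)}
  trans := {t | ∃ c ∈ C, t = (Alpha.var 0, [], (SymT.var 0, c))} ∪
      {t | ∃ c ∈ C, t = (Alpha.neg, [(SymT.var 0, c)], (SymT.start, nsem c))}

/-- Initial value sets obtained from the final states of children root FTAs. -/
def initsOf {α ν val : Type} (Hs : List (HFTA α (TQ ν val))) : ℕ → Set val :=
  fun i =>
    match Hs[i]? with
    | some H => rootVals H
    | none => ∅

/-- Ground specifications `ψ`: constants, applications of function symbols,
binary relational/logical operators, and negation.  A ground specification in
which the topmost constructor is `bin` or `neg` is a formula; one built only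
from `cst`/`app` is a term. -/
inductive GS (F val bop : Type) : Type where
  | cst : val → GS F val bop
  | app : F → List (GS F val bop) → GS F val bop
  | bin : bop → GS F val bop → GS F val bop → GS F val bop
  | neg : GS F val bop → GS F val bop

/-- `ψ` is a term (no logical structure). -/
inductive IsTerm {F val bop : Type} : GS F val bop → Prop where
  | cst (c : val) : IsTerm (GS.cst c)
  | app (f : F) (ts : List (GS F val bop)) : (∀ t ∈ ts, IsTerm t) → IsTerm (GS.app f ts)

/-- `ψ` is a formula. -/
inductive IsForm {F val bop : Type} : GS F val bop → Prop where
  | bin (b : bop) (ψ₁ ψ₂ : GS F val bop) : IsForm (GS.bin b ψ₁ ψ₂)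
  | neg (ψ : GS F val bop) : IsForm ψ → IsForm (GS.neg ψ)

/-- Function symbol `g` occurs at position `p` in a ground specification. -/
inductive OccursAt {F val bop : Type} : GS F val bop → F → List ℕ → Prop where
  | here (f : F) (ts : List (GS F val bop)) : OccursAt (GS.app f ts) f []
  | app (f g : F) (ts : List (GS F val bop)) (i : ℕ) (t : GS F val bop) (p : List ℕ) :
      ts[i]? = some t → OccursAt t g p → OccursAt (GS.app f ts) g (i :: p)
  | binl (b : bop) (ψ₁ ψ₂ : GS F val bop) (g : F) (p : List ℕ) :
      OccursAt ψ₁ g p → OccursAt (GS.bin b ψ₁ ψ₂) g (0 :: p)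
  | binr (b : bop) (ψ₁ ψ₂ : GS F val bop) (g : F) (p : List ℕ) :
      OccursAt ψ₂ g p → OccursAt (GS.bin b ψ₁ ψ₂) g (1 :: p)
  | neg (ψ : GS F val bop) (g : F) (p : List ℕ) :
      OccursAt ψ g p → OccursAt (GS.neg ψ) g (0 :: p)

/-- Every function symbol occurs (at most) once in the ground specification. -/
def OccursOnce {F val bop : Type} (Φ : GS F val bop) : Prop :=
  ∀ (g : F) (p₁ p₂ : List ℕ), OccursAt Φ g p₁ → OccursAt Φ g p₂ → p₁ = p₂

/-- Evaluation of a ground specification under an interpretation `I` assigning a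
program to every function symbol. -/
inductive SpecEval {op val bop F : Type} [Inhabited val] (sem : op → List val → val)
    (bsem : bop → val → val → val) (nsem : val → val)
    (I : F → Tree (Alpha op val bop)) : GS F val bop → val → Prop where
  | cst (c : val) : SpecEval sem bsem nsem I (GS.cst c) c
  | app (f : F) (ts : List (GS F val bop)) (cs : List val) (c : val) :
      ts.length = cs.length →
      (∀ p ∈ ts.zip cs, SpecEval sem bsem nsem I p.1 p.2) →
      EvalsTo sem bsem nsem (fun i => cs.getD i default) (I f) c →
      SpecEval sem bsem nsem I (GS.app f ts) c
  | bin (b : bop) (ψ₁ ψ₂ : GS F val bop) (c₁ c₂ : val) :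
      SpecEval sem bsem nsem I ψ₁ c₁ →
      SpecEval sem bsem nsem I ψ₂ c₂ →
      SpecEval sem bsem nsem I (GS.bin b ψ₁ ψ₂) (bsem b c₁ c₂)
  | neg (ψ : GS F val bop) (c : val) :
      SpecEval sem bsem nsem I ψ c →
      SpecEval sem bsem nsem I (GS.neg ψ) (nsem c)

/-- `I ⊨ Φ`: the ground specification evaluates to true under interpretation `I`. -/
def Satisfies {op val bop F : Type} [Inhabited val] (sem : op → List val → val)
    (bsem : bop → val → val → val) (nsem : val → val) (vtrue : val)
    (I : F → Tree (Alpha op val bop)) (Φ : GS F val bop) : Prop :=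
  SpecEval sem bsem nsem I Φ vtrue

/-- HFTA construction judgment `𝒢, ℳ ⊢ ψ ↝ ℋ` (rules Const, Func, Logical, Neg).
`gram f` is the grammar `𝒢(ℳ⁻¹(f))` associated with occurrence symbol `f`. -/
inductive BuildsH {op val bop ν F : Type} (gram : F → Grammar op ν)
    (sem : op → List val → val) (bsem : bop → val → val → val) (nsem : val → val)
    (vtrue vfalse : val) : GS F val bop → HFTA (Alpha op val bop) (TQ ν val) → Prop where
  | cst (c : val) :
      BuildsH gram sem bsem nsem vtrue vfalse (GS.cst c) (combine (constFTA bop c) [])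
  | app (f : F) (ts : List (GS F val bop)) (Hs : List (HFTA (Alpha op val bop) (TQ ν val))) :
      ts.length = Hs.length →
      (∀ p ∈ ts.zip Hs, BuildsH gram sem bsem nsem vtrue vfalse p.1 p.2) →
      BuildsH gram sem bsem nsem vtrue vfalse (GS.app f ts)
        (combine (buildFTA bop (gram f) sem ts.length (initsOf Hs)) Hs)
  | bin (b : bop) (ψ₁ ψ₂ : GS F val bop) (H₁ H₂ : HFTA (Alpha op val bop) (TQ ν val)) :
      BuildsH gram sem bsem nsem vtrue vfalse ψ₁ H₁ →
      BuildsH gram sem bsem nsem vtrue vfalse ψ₂ H₂ →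
      BuildsH gram sem bsem nsem vtrue vfalse (GS.bin b ψ₁ ψ₂)
        (combine (logicFTA vtrue vfalse bsem b (rootVals H₁) (rootVals H₂)) [H₁, H₂])
  | neg (ψ : GS F val bop) (H₁ : HFTA (Alpha op val bop) (TQ ν val)) :
      BuildsH gram sem bsem nsem vtrue vfalse ψ H₁ →
      BuildsH gram sem bsem nsem vtrue vfalse (GS.neg ψ)
        (combine (negFTA vtrue vfalse nsem (rootVals H₁)) [H₁])

/-- The Final rule: restrict the final states of the root node's FTA to `{q_{s₀}^⊤}`. -/
def finalize {α ν val : Type} (vtrue : val) (H : HFTA α (TQ ν val)) :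
    HFTA α (TQ ν val) where
  nodes := H.nodes
  fta := fun v =>
    if v = [] then
      ⟨(H.fta []).states, {q | q ∈ (H.fta []).finals ∧ q.2 = (SymT.start, vtrue)},
        (H.fta []).trans⟩
    else H.fta v
  children := H.children
  inter := H.inter


/-- The final states of `A` reachable by (accepting) runs of `A` on program `p`. -/
def reachFinals {op val bop Q : Type} (A : FTA (Alpha op val bop) Q)
    (p : Tree (Alpha op val bop)) : Set Q :=
  {q | q ∈ A.finals ∧ ∃ leaf, RunFrom A leaf p q}

/-- The `Propagate` procedure (Algorithm 3): for every node `v ∈ W` (the nodes of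
the occurrences of the function being propagated), shrink the final states of
`Ω(v)` to those reachable by runs on the program `p`, and remove every
inter-FTA transition whose source is a final state that was removed. -/
def propagate {op val bop Q : Type} (H : HFTA (Alpha op val bop) Q)
    (p : Tree (Alpha op val bop)) (W : Set (List ℕ)) : HFTA (Alpha op val bop) Q where
  nodes := H.nodes
  fta := fun v =>
    ⟨(H.fta v).states,
      {q | q ∈ (H.fta v).finals ∧ (v ∈ W → q ∈ reachFinals (H.fta v) p)},
      (H.fta v).trans⟩
  children := H.children
  inter := {e | e ∈ H.inter ∧
      ∀ v ∈ W, e.1 ∈ (H.fta v).finals → e.1 ∈ reachFinals (H.fta v) p}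

/-- Relaxation of a ground specification: each occurrence of a function symbol
of `Φ` is replaced by a fresh occurrence symbol; `Mi` maps each occurrence
symbol back to the original symbol (i.e. `Mi = ℳ⁻¹`). -/
inductive Relax {F F₀ val bop : Type} (Mi : F → F₀) :
    GS F₀ val bop → GS F val bop → Prop where
  | cst (c : val) : Relax Mi (GS.cst c) (GS.cst c)
  | app (f : F₀) (f' : F) (ts : List (GS F₀ val bop)) (ts' : List (GS F val bop)) :
      Mi f' = f →
      ts.length = ts'.length →
      (∀ p ∈ ts.zip ts', Relax Mi p.1 p.2) →
      Relax Mi (GS.app f ts) (GS.app f' ts')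
  | bin (b : bop) (ψ₁ ψ₂ : GS F₀ val bop) (ψ₁' ψ₂' : GS F val bop) :
      Relax Mi ψ₁ ψ₁' → Relax Mi ψ₂ ψ₂' →
      Relax Mi (GS.bin b ψ₁ ψ₂) (GS.bin b ψ₁' ψ₂')
  | neg (ψ : GS F₀ val bop) (ψ' : GS F val bop) :
      Relax Mi ψ ψ' → Relax Mi (GS.neg ψ) (GS.neg ψ')

/-- Returning traces of the backtracking procedure `FindProgs` (Algorithm 2).
`occNodes f` is the set of HFTA nodes of the occurrences of the original
function symbol `f`.  `FPRet occNodes H P R` holds iff `FindProgs(H, P, ℳ)` can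
return the total assignment `R`: either all symbols are assigned, or some
unassigned symbol `f` gets a program `p` read off (at the node of one of its
occurrences) from a hierarchical tree accepted by the current HFTA such that
propagating `p` yields an HFTA with non-empty language, and the recursive call
returns `R`. -/
inductive FPRet {op val bop Q F₀ : Type} [DecidableEq F₀]
    (occNodes : F₀ → Set (List ℕ)) :
    HFTA (Alpha op val bop) Q → (F₀ → Option (Tree (Alpha op val bop))) →
    (F₀ → Tree (Alpha op val bop)) → Prop where
  | done (H : HFTA (Alpha op val bop) Q) (P : F₀ → Option (Tree (Alpha op val bop)))
      (R : F₀ → Tree (Alpha op val bop)) :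
      (∀ f, P f = some (R f)) → FPRet occNodes H P R
  | step (H : HFTA (Alpha op val bop) Q) (P : F₀ → Option (Tree (Alpha op val bop)))
      (R : F₀ → Tree (Alpha op val bop)) (f : F₀) (v : List ℕ)
      (p : Tree (Alpha op val bop)) (T : List ℕ → Tree (Alpha op val bop)) :
      P f = none →
      v ∈ occNodes f →
      HAccepts H T →
      T v = p →
      (∃ T', HAccepts (propagate H p (occNodes f)) T') →
      FPRet occNodes (propagate H p (occNodes f)) (Function.update P f (some p)) R →
      FPRet occNodes H P R

/-- The inductive synthesis phase of Algorithm 1 (lines 8--11): relax the ground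
specification `Φ`, build the HFTA for the relaxed specification (rules
Const/Func/Logical/Neg followed by the Final rule), and run `FindProgs` on it
starting from the everywhere-unassigned map, obtaining programs `R`. -/
def InductiveSynth {op val bop ν F₀ : Type} [Inhabited val] [DecidableEq F₀]
    (G : F₀ → Grammar op ν) (sem : op → List val → val) (bsem : bop → val → val → val)
    (nsem : val → val) (vtrue vfalse : val)
    (Φ : GS F₀ val bop) (R : F₀ → Tree (Alpha op val bop)) : Prop :=
  ∃ (F : Type) (Mi : F → F₀) (Φ' : GS F val bop) (H' : HFTA (Alpha op val bop) (TQ ν val)),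
    Relax Mi Φ Φ' ∧ OccursOnce Φ' ∧
    BuildsH (fun f' => G (Mi f')) sem bsem nsem vtrue vfalse Φ' H' ∧
    FPRet (fun f => {v | ∃ f' : F, Mi f' = f ∧ OccursAt Φ' f' v})
      (finalize vtrue H') (fun _ => none) R

/-- Returning traces of the CEGIS loop `Synthesize` (Algorithm 1).
`SynthRet … P Φ R` holds iff, starting from candidate programs `P` and
accumulated ground specification `Φ`, the loop can return the programs `R`:
either the current candidates verify against the relational specification `Ψ`,
or a new relational counterexample `Ψ σ` (an instantiation of the universal
quantifiers of `Ψ` violated by `P`) is conjoined to `Φ` and inductive synthesis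
produces new candidates. -/
inductive SynthRet {op val bop ν F₀ : Type} [Inhabited val] [DecidableEq F₀]
    (G : F₀ → Grammar op ν) (sem : op → List val → val) (bsem : bop → val → val → val)
    (nsem : val → val) (vtrue vfalse : val) (andOp : bop)
    (Ψ : (ℕ → val) → GS F₀ val bop)
    (verify : (F₀ → Tree (Alpha op val bop)) → Prop) :
    (F₀ → Tree (Alpha op val bop)) → GS F₀ val bop → (F₀ → Tree (Alpha op val bop)) → Prop where
  | verified (P : F₀ → Tree (Alpha op val bop)) (Φ : GS F₀ val bop) :
      verify P →
      SynthRet G sem bsem nsem vtrue vfalse andOp Ψ verify P Φ P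
  | refine (P P' R : F₀ → Tree (Alpha op val bop)) (Φ : GS F₀ val bop) (σ : ℕ → val) :
      ¬ verify P →
      ¬ Satisfies sem bsem nsem vtrue P (Ψ σ) →
      InductiveSynth G sem bsem nsem vtrue vfalse (GS.bin andOp Φ (Ψ σ)) P' →
      SynthRet G sem bsem nsem vtrue vfalse andOp Ψ verify P' (GS.bin andOp Φ (Ψ σ)) R →
      SynthRet G sem bsem nsem vtrue vfalse andOp Ψ verify P Φ R


/-- Auxiliary: every transition of the FTA has "grammar shape". -/
def StripOK {op val bop ν : Type} (Gr : Grammar op ν)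
    (A : FTA (Alpha op val bop) (TQ ν val)) : Prop :=
  ∀ a qs q, (a, qs, q) ∈ A.trans →
    (∃ i : ℕ, a = Alpha.var i ∧ qs = [] ∧ q.2.1 = SymT.var i) ∨
    (∃ s o ss, a = Alpha.dsl o ∧ (s, o, ss) ∈ Gr.prods ∧
      qs.map (fun x => x.2.1) = ss ∧ q.2.1 = SymT.nt s)

lemma run_derives {op val bop ν : Type} {Gr : Grammar op ν}
    {A : FTA (Alpha op val bop) (TQ ν val)} (hA : StripOK Gr A) {leaf : ℕ → TQ ν val}
    {t : Tree (Alpha op val bop)} {q : TQ ν val} (h : RunFrom A leaf t q) :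
    Derives Gr q.2.1 t := by
  induction h with
  | node a ts qs q htr hvar hlen hall ih =>
    rcases hA a qs q htr with ⟨i, ha, hqs, hq⟩ | ⟨s, o, ss, ha, hprod, hmap, hq⟩
    · subst ha hqs
      have hts : ts = [] := List.eq_nil_of_length_eq_zero (by simpa using hlen)
      subst hts
      rw [hq]
      exact Derives.var i
    · subst ha
      subst hmap
      rw [hq]
      have hlen2 : (qs.map (fun x => x.2.1)).length = ts.length := by
        simp [hlen]
      refine Derives.prod s o _ ts hprod hlen2 ?_
      intro p hp
      rcases List.mem_iff_getElem.mp hp with ⟨k, hk, hget⟩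
      rw [List.length_zip] at hk
      have hk3 : k < qs.length := by simp at hk; omega
      have hk2 : k < ts.length := by simp at hk; omega
      have hgz : ((qs.map (fun x => x.2.1)).zip ts)[k]'(by simpa [List.length_zip, hlen]
          using hk) = ((qs.map (fun x => x.2.1))[k]'(by simpa using hk3), ts[k]) :=
        List.getElem_zip
      rw [hgz] at hget
      have hmem : (ts[k], qs[k]) ∈ ts.zip qs := by
        have : (ts.zip qs)[k]'(by simp [List.length_zip]; omega) = (ts[k], qs[k]) :=
          List.getElem_zip
        rw [← this]
        exact List.getElem_mem _
      have hder := ih _ hmem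
      rw [← hget]
      simpa using hder

/-- Good properties of the FTA at a node, for grammar `Gr`. -/
def GoodFTA {op val bop ν : Type} (Gr : Grammar op ν)
    (A : FTA (Alpha op val bop) (TQ ν val)) : Prop :=
  StripOK Gr A ∧ ∀ q ∈ A.finals, q.2.1 = SymT.nt Gr.start

lemma goodFTA_map_tag {op val bop ν : Type} {Gr : Grammar op ν}
    {A : FTA (Alpha op val bop) (TQ ν val)} (hA : GoodFTA Gr A) (i : ℕ) :
    GoodFTA Gr (mapFTA (tagState i) A) := by
  obtain ⟨h1, h2⟩ := hA
  constructor
  · intro a qs q htr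
    obtain ⟨a', qs', q', htr', heq⟩ := htr
    have ⟨ha, hqs, hq0⟩ : a = a' ∧ qs = qs'.map (tagState i) ∧ q = tagState i q' := by
      injection heq with h hh
      injection hh with h2 h3
      exact ⟨h, h2, h3⟩
    subst ha hqs hq0
    rcases h1 _ _ _ htr' with ⟨j, ha, hqs, hq⟩ | ⟨s, o, ss, ha, hprod, hmap, hq⟩
    · exact Or.inl ⟨j, ha, by simp [hqs], by simpa [tagState] using hq⟩
    · refine Or.inr ⟨s, o, ss, ha, hprod, ?_, by simpa [tagState] using hq⟩
      rw [← hmap]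
      simp [tagState]
  · rintro q ⟨q', hq', rfl⟩
    simpa [tagState] using h2 q' hq'

lemma goodFTA_build {op val bop ν : Type} (Gr : Grammar op ν) (sem : op → List val → val)
    (arity : ℕ) (init : ℕ → Set val) :
    GoodFTA Gr (mapFTA (fun q => (([] : List ℕ), q))
      (buildFTA bop Gr sem arity init)) := by
  constructor
  · intro a qs q htr
    obtain ⟨a', qs', q', htr', heq⟩ := htr
    have ⟨ha, hqs, hq⟩ : a = a' ∧ qs = qs'.map (fun q => (([] : List ℕ), q))
        ∧ q = (([] : List ℕ), q') := by
      injection heq with h hh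
      injection hh with h2 h3
      exact ⟨h, h2, h3⟩
    subst ha hqs hq
    cases htr' with
    | input i c hi hc => exact Or.inl ⟨i, rfl, by simp, rfl⟩
    | prod s o ss cs hprod hlen hall =>
      refine Or.inr ⟨s, o, ss, rfl, hprod, ?_, rfl⟩
      rw [List.map_map]
      have : ((fun q : TQ ν val => q.2.1) ∘ fun q : SymT ν × val => (([] : List ℕ), q))
          = Prod.fst := rfl
      rw [this]
      exact List.map_fst_zip (le_of_eq hlen)
  · rintro q ⟨q', ⟨_, hq'⟩, rfl⟩
    exact hq'

lemma mem_zip_of_get {β γ : Type*} {l₁ : List β} {l₂ : List γ} {i : ℕ} {b : β}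
    (hlen : l₁.length = l₂.length) (h : l₁[i]? = some b) :
    ∃ c, l₂[i]? = some c ∧ (b, c) ∈ l₁.zip l₂ := by
  have hi : i < l₁.length := by
    by_contra hc
    rw [List.getElem?_eq_none (by omega)] at h
    exact nomatch h
  have hi2 : i < l₂.length := hlen ▸ hi
  refine ⟨l₂[i], by simp [hi2], ?_⟩
  have hb : l₁[i] = b := by
    have := List.getElem?_eq_getElem hi
    rw [h] at this
    exact (Option.some.injEq _ _ ▸ this).symm
  have hz : (l₁.zip l₂)[i]'(by simp [List.length_zip]; omega) = (l₁[i], l₂[i]) :=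
    List.getElem_zip
  rw [← hb, ← hz]
  exact List.getElem_mem _

lemma goodFTA_combine_child {op val bop ν : Type}
    {A : FTA (Alpha op val bop) (SymT ν × val)}
    {Hs : List (HFTA (Alpha op val bop) (TQ ν val))}
    {i : ℕ} {Hi : HFTA (Alpha op val bop) (TQ ν val)} (hsome : Hs[i]? = some Hi)
    (v' : List ℕ) :
    (combine A Hs).fta (i :: v') = mapFTA (tagState i) (Hi.fta v') := by
  simp only [combine, hsome]

lemma goodFTA_combine_node {op val bop ν : Type}
    {A : FTA (Alpha op val bop) (SymT ν × val)}
    {Hs : List (HFTA (Alpha op val bop) (TQ ν val))}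
    {i : ℕ} {Hi : HFTA (Alpha op val bop) (TQ ν val)} (hsome : Hs[i]? = some Hi)
    {v' : List ℕ} (hv' : v' ∈ Hi.nodes) :
    (i :: v') ∈ (combine A Hs).nodes :=
  Or.inr ⟨i, Hi, v', hsome, hv', rfl⟩

/-- Main structural lemma: at every occurrence node of `f'`, the constructed
HFTA carries a grammar-shaped FTA for `gram f'`. -/
lemma buildsH_occ {op val bop ν F : Type} {gram : F → Grammar op ν}
    {sem : op → List val → val} {bsem : bop → val → val → val} {nsem : val → val}
    {vtrue vfalse : val} {ψ : GS F val bop} {H : HFTA (Alpha op val bop) (TQ ν val)}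
    (h : BuildsH gram sem bsem nsem vtrue vfalse ψ H) :
    ∀ (f' : F) (v : List ℕ), OccursAt ψ f' v →
      v ∈ H.nodes ∧ GoodFTA (gram f') (H.fta v) := by
  induction h with
  | cst c =>
    intro f' v hocc
    cases hocc
  | app f ts Hs hlen hall ih =>
    intro f' v hocc
    cases hocc with
    | here _ _ =>
      exact ⟨Or.inl rfl, goodFTA_build (gram f) sem ts.length (initsOf Hs)⟩
    | app _ _ _ i t p hget hocc' =>
      obtain ⟨Hi, hsome, hmem⟩ := mem_zip_of_get hlen hget
      obtain ⟨hnode, hgood⟩ := ih _ hmem f' p hocc'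
      refine ⟨goodFTA_combine_node hsome hnode, ?_⟩
      rw [goodFTA_combine_child hsome]
      exact goodFTA_map_tag hgood i
  | bin b ψ₁ ψ₂ H₁ H₂ h₁ h₂ ih₁ ih₂ =>
    intro f' v hocc
    cases hocc with
    | binl _ _ _ _ p hocc' =>
      obtain ⟨hnode, hgood⟩ := ih₁ f' p hocc'
      have hsome : [H₁, H₂][0]? = some H₁ := rfl
      refine ⟨goodFTA_combine_node hsome hnode, ?_⟩
      rw [goodFTA_combine_child hsome]
      exact goodFTA_map_tag hgood 0
    | binr _ _ _ _ p hocc' =>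
      obtain ⟨hnode, hgood⟩ := ih₂ f' p hocc'
      have hsome : [H₁, H₂][1]? = some H₂ := rfl
      refine ⟨goodFTA_combine_node hsome hnode, ?_⟩
      rw [goodFTA_combine_child hsome]
      exact goodFTA_map_tag hgood 1
  | neg ψ H₁ h₁ ih₁ =>
    intro f' v hocc
    cases hocc with
    | neg _ _ p hocc' =>
      obtain ⟨hnode, hgood⟩ := ih₁ f' p hocc'
      have hsome : [H₁][0]? = some H₁ := rfl
      refine ⟨goodFTA_combine_node hsome hnode, ?_⟩
      rw [goodFTA_combine_child hsome]
      exact goodFTA_map_tag hgood 0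

lemma goodFTA_finalize {op val bop ν : Type} {Gr : Grammar op ν} (vtrue : val)
    {H : HFTA (Alpha op val bop) (TQ ν val)} {v : List ℕ}
    (h : GoodFTA Gr (H.fta v)) : GoodFTA Gr ((finalize vtrue H).fta v) := by
  obtain ⟨h1, h2⟩ := h
  by_cases hv : v = []
  · subst hv
    refine ⟨fun a qs q htr => h1 a qs q (by simpa [finalize] using htr), ?_⟩
    intro q hq
    have hq' : q ∈ (H.fta []).finals ∧ q.2 = (SymT.start, vtrue) := by
      simpa [finalize] using hq
    exact h2 q hq'.1
  · refine ⟨fun a qs q htr => h1 a qs q (by simpa [finalize, hv] using htr), ?_⟩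
    intro q hq
    exact h2 q (by simpa [finalize, hv] using hq)

lemma goodFTA_propagate {op val bop ν : Type} {Gr : Grammar op ν}
    {H : HFTA (Alpha op val bop) (TQ ν val)} {p : Tree (Alpha op val bop)}
    {W : Set (List ℕ)} {v : List ℕ}
    (h : GoodFTA Gr (H.fta v)) : GoodFTA Gr ((propagate H p W).fta v) := by
  obtain ⟨h1, h2⟩ := h
  exact ⟨fun a qs q htr => h1 a qs q htr, fun q hq => h2 q hq.1⟩

/-- Invariant through the `FindProgs` recursion. -/
lemma fpret_conform {op val bop ν F₀ : Type} [DecidableEq F₀]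
    (G : F₀ → Grammar op ν) (occNodes : F₀ → Set (List ℕ))
    {H : HFTA (Alpha op val bop) (TQ ν val)}
    {P : F₀ → Option (Tree (Alpha op val bop))} {R : F₀ → Tree (Alpha op val bop)}
    (h : FPRet occNodes H P R) :
    (∀ f v, v ∈ occNodes f → v ∈ H.nodes ∧ GoodFTA (G f) (H.fta v)) →
    (∀ f p, P f = some p → ConformsTo (G f) p) →
    ∀ f, ConformsTo (G f) (R f) := by
  induction h with
  | done H P R hall =>
    intro _ hP f
    exact hP f _ (hall f)
  | step H P R f v p T hPf hv hacc hTv hne hrec ih =>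
    intro hGood hP
    apply ih
    · intro g w hw
      obtain ⟨hn, hg⟩ := hGood g w hw
      exact ⟨hn, goodFTA_propagate hg⟩
    · intro g pg hpg
      by_cases hgf : g = f
      · subst hgf
        rw [Function.update_self] at hpg
        have hpg' : pg = p := (Option.some.inj hpg).symm
        subst hpg'
        obtain ⟨ρ, leaf, hacc'⟩ := hacc
        obtain ⟨hn, hstrip, hfin⟩ := hGood g v hv
        obtain ⟨hfinal, hrun, -⟩ := hacc' v hn
        have hder := run_derives hstrip hrun
        rw [hfin _ hfinal] at hder
        rw [← hTv]
        exact hder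
      · rw [Function.update_of_ne hgf] at hpg
        exact hP g pg hpg

/-- Soundness of the inductive synthesis phase for grammar conformance. -/
lemma inductiveSynth_conform {op val bop ν F₀ : Type} [Inhabited val] [DecidableEq F₀]
    {G : F₀ → Grammar op ν} {sem : op → List val → val} {bsem : bop → val → val → val}
    {nsem : val → val} {vtrue vfalse : val}
    {Φ : GS F₀ val bop} {R : F₀ → Tree (Alpha op val bop)}
    (h : InductiveSynth G sem bsem nsem vtrue vfalse Φ R) :
    ∀ f, ConformsTo (G f) (R f) := by
  obtain ⟨F, Mi, Φ', H', hrelax, honce, hbuild, hfp⟩ := h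
  refine fpret_conform G _ hfp ?_ ?_
  · rintro f v ⟨f', rfl, hocc⟩
    obtain ⟨hn, hg⟩ := buildsH_occ hbuild f' v hocc
    exact ⟨hn, goodFTA_finalize vtrue hg⟩
  · intro f p hp
    exact nomatch hp


/-- Soundness of the CEGIS synthesis algorithm (Theorem 4.3). -/
theorem synthesize_sound
    {op val bop ν F₀ : Type} [Inhabited val] [DecidableEq F₀]
    (G : F₀ → Grammar op ν)
    (sem : op → List val → val) (bsem : bop → val → val → val) (nsem : val → val)
    (vtrue vfalse : val) (andOp : bop)
    (Ψ : (ℕ → val) → GS F₀ val bop)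
    (verify : (F₀ → Tree (Alpha op val bop)) → Prop)
    (hverify : ∀ P : F₀ → Tree (Alpha op val bop),
        verify P → ∀ σ : ℕ → val, Satisfies sem bsem nsem vtrue P (Ψ σ))
    (P₀ R : F₀ → Tree (Alpha op val bop))
    (hP₀ : ∀ f : F₀, ConformsTo (G f) (P₀ f))
    (hrun : SynthRet G sem bsem nsem vtrue vfalse andOp Ψ verify P₀ (GS.cst vtrue) R) :
    (∀ σ : ℕ → val, Satisfies sem bsem nsem vtrue R (Ψ σ)) ∧
    ∀ f : F₀, ConformsTo (G f) (R f) := by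
  have key : ∀ (P : F₀ → Tree (Alpha op val bop)) (Φ : GS F₀ val bop)
      (R' : F₀ → Tree (Alpha op val bop)),
      SynthRet G sem bsem nsem vtrue vfalse andOp Ψ verify P Φ R' →
      (∀ f, ConformsTo (G f) (P f)) →
      (∀ σ, Satisfies sem bsem nsem vtrue R' (Ψ σ)) ∧ ∀ f, ConformsTo (G f) (R' f) := by
    intro P Φ R' h
    induction h with
    | verified P Φ hv =>
      intro hP
      exact ⟨fun σ => hverify P hv σ, hP⟩
    | refine P P' R' Φ σ hnv hns hind hrec ih =>
      intro _
      exact ih (inductiveSynth_conform hind)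
  exact key P₀ _ R hrun hP₀

end Relish
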